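/- Let Ω be a set, f: Ω → Ω, φ: Ω → ℝ^d, and Φ: Ω → ℝ^L injective, and let g: ℝ^d × ℝ^L → ℝ^L satisfy Φ(f(ω)) = g(φ(ω), Φ(ω)) for all ω ∈ Ω and be 1-Lipschitz in the norm ‖(u, y)‖ := ‖u‖ + ‖y‖. Let r: ℝ^L → Φ(Ω) be a κ-Lipschitz retraction (r(Φ(ω)) = Φ(ω) for all ω), and let C: Ω → [0, ∞) satisfy ‖φ(ω') − φ(ω)‖ ≤ C(ω) ‖Φ(ω') − Φ(ω)‖ for all ω, ω' ∈ Ω. Define h := (φ, Φ), w̄ := (φ ∘ f) ∘ Φ^{−1} ∘ r, and 𝒯(u, y) := (w̄(y), g(u, y)). Fix ω₀ ∈ Ω, δ₀ ∈ ℝ^L, and set z₀' := (φ(ω₀), Φ(ω₀) + δ₀). Then there exists a sequence (ω_n)_{n≥0} in Ω with the given ω₀ as its first term such that, writing z_n := h(ω_n), δ_n := proj₂(𝒯ⁿ(z₀')) − Φ(ω_n), and C̃(ω) := (1 + C(ω)) κ, the following hold for all n ≥ 0: (i) proj₁(𝒯ⁿ(z₀')) = proj₁(z_n), i.e., 𝒯ⁿ(z₀')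 is a Φ-perturbation of z_n; (ii) ω_{n+1} = f(Φ^{−1}(r(Φ(ω_n) + δ_n))); (iii) ‖δ_{n+1}‖ ≤ (1 + C̃(ω_n)) ‖δ_n‖, hence ‖δ_n‖ ≤ ‖δ₀‖ ∏_{i=0}^{n−1} (1 + C̃(ω_i)); and (iv) the points z_n'' := h(Φ^{−1}(r(Φ(ω_n) + δ_n))) ∈ h(Ω) satisfy ‖z_n'' − z_n‖ ≤ C̃(ω_n) ‖δ_n‖ ≤ ‖δ₀‖ C̃(ω_n) ∏_{i=0}^{n−1} (1 + C̃(ω_i)). -/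

import Mathlib

open Filter Topology

/-- iterated perturbation lemma. Starting from a Φ-perturbation
of a point of X = h(Ω), every iterate of the reconstructed system
𝒯(u, y) = (w̄(y), g(u, y)) remains a Φ-perturbation of a point of X, with
perturbation sizes controlled multiplicatively by the factors
(1 + (1 + C(ωᵢ))κ). Distances are measured in the norm ‖(u, y)‖ = ‖u‖ + ‖y‖. -/
theorem iterated_perturbation {Ω : Type*} [Nonempty Ω] {d L : ℕ}
    (f : Ω → Ω) (φ : Ω → (Fin d → ℝ)) (Φ : Ω → (Fin L → ℝ))
    (hΦ : Function.Injective Φ)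
    (g : (Fin d → ℝ) × (Fin L → ℝ) → (Fin L → ℝ))
    (hg_inv : ∀ ω : Ω, Φ (f ω) = g (φ ω, Φ ω))
    (hg_lip : ∀ (u u' : Fin d → ℝ) (y y' : Fin L → ℝ),
      ‖g (u, y) - g (u', y')‖ ≤ ‖u - u'‖ + ‖y - y'‖)
    (r : (Fin L → ℝ) → (Fin L → ℝ)) (κ : ℝ) (hκ : 0 ≤ κ)
    (hr_range : ∀ y : Fin L → ℝ, r y ∈ Set.range Φ)
    (hr_retract : ∀ ω : Ω, r (Φ ω) = Φ ω)
    (hr_lip : ∀ y y' : Fin L → ℝ, ‖r y - r y'‖ ≤ κ * ‖y - y'‖)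
    (C : Ω → ℝ) (hC0 : ∀ ω : Ω, 0 ≤ C ω)
    (hC : ∀ ω ω' : Ω, ‖φ ω' - φ ω‖ ≤ C ω * ‖Φ ω' - Φ ω‖)
    (ω₀ : Ω) (δ₀ : Fin L → ℝ) :
    ∃ ω : ℕ → Ω, ω 0 = ω₀ ∧
      let wbar : (Fin L → ℝ) → (Fin d → ℝ) := fun y => φ (f (Function.invFun Φ (r y)))
      let T : (Fin d → ℝ) × (Fin L → ℝ) → (Fin d → ℝ) × (Fin L → ℝ) :=
        fun z => (wbar z.2, g z)
      let z₀' : (Fin d → ℝ) × (Fin L → ℝ) := (φ ω₀, Φ ω₀ + δ₀)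
      let δ : ℕ → (Fin L → ℝ) := fun n => (T^[n] z₀').2 - Φ (ω n)
      let Ct : Ω → ℝ := fun ω' => (1 + C ω') * κ
      ∀ n : ℕ,
        ((T^[n] z₀').1 = φ (ω n)) ∧
        (ω (n + 1) = f (Function.invFun Φ (r (Φ (ω n) + δ n)))) ∧
        (‖δ (n + 1)‖ ≤ (1 + Ct (ω n)) * ‖δ n‖) ∧
        (‖δ n‖ ≤ ‖δ₀‖ * ∏ i ∈ Finset.range n, (1 + Ct (ω i))) ∧
        (‖φ (Function.invFun Φ (r (Φ (ω n) + δ n))) - φ (ω n)‖ +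
            ‖Φ (Function.invFun Φ (r (Φ (ω n) + δ n))) - Φ (ω n)‖
          ≤ Ct (ω n) * ‖δ n‖) ∧
        (‖φ (Function.invFun Φ (r (Φ (ω n) + δ n))) - φ (ω n)‖ +
            ‖Φ (Function.invFun Φ (r (Φ (ω n) + δ n))) - Φ (ω n)‖
          ≤ ‖δ₀‖ * Ct (ω n) * ∏ i ∈ Finset.range n, (1 + Ct (ω i))) := by

  classical
  let σ : (Fin L → ℝ) → Ω := fun y => Function.invFun Φ (r y)
  have hσ : ∀ y, Φ (σ y) = r y := fun y => Function.invFun_eq (hr_range y)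
  let wbar : (Fin L → ℝ) → (Fin d → ℝ) := fun y => φ (f (Function.invFun Φ (r y)))
  let T : (Fin d → ℝ) × (Fin L → ℝ) → (Fin d → ℝ) × (Fin L → ℝ) :=
    fun z => (wbar z.2, g z)
  let z₀' : (Fin d → ℝ) × (Fin L → ℝ) := (φ ω₀, Φ ω₀ + δ₀)
  let ωs : ℕ → Ω := fun n => Nat.rec ω₀ (fun k _ => f (σ ((T^[k] z₀').2))) n
  let δs : ℕ → (Fin L → ℝ) := fun n => (T^[n] z₀').2 - Φ (ωs n)
  let Ct : Ω → ℝ := fun ω' => (1 + C ω') * κ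
  have hCt0 : ∀ ω', 0 ≤ Ct ω' := fun ω' => mul_nonneg (by linarith [hC0 ω']) hκ
  have hωsucc : ∀ n, ωs (n + 1) = f (σ ((T^[n] z₀').2)) := fun n => rfl
  have hy : ∀ n, Φ (ωs n) + δs n = (T^[n] z₀').2 := by
    intro n; show Φ (ωs n) + ((T^[n] z₀').2 - Φ (ωs n)) = _; abel
  have hfst : ∀ n, (T^[n] z₀').1 = φ (ωs n) := by
    intro n
    induction n with
    | zero => rfl
    | succ n ih => rw [Function.iterate_succ_apply']
  have e1 : ∀ n, ‖Φ (σ ((T^[n] z₀').2)) - Φ (ωs n)‖ ≤ κ * ‖δs n‖ := by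
    intro n
    calc ‖Φ (σ ((T^[n] z₀').2)) - Φ (ωs n)‖
        = ‖r ((T^[n] z₀').2) - r (Φ (ωs n))‖ := by rw [hσ, hr_retract]
      _ ≤ κ * ‖(T^[n] z₀').2 - Φ (ωs n)‖ := hr_lip _ _
      _ = κ * ‖δs n‖ := rfl
  have e2 : ∀ n, ‖φ (σ ((T^[n] z₀').2)) - φ (ωs n)‖ ≤ C (ωs n) * (κ * ‖δs n‖) :=
    fun n => (hC _ _).trans (mul_le_mul_of_nonneg_left (e1 n) (hC0 _))
  have e3 : ∀ n, ‖(T^[n] z₀').2 - r ((T^[n] z₀').2)‖ ≤ (1 + κ) * ‖δs n‖ := by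
    intro n
    have hsplit : (T^[n] z₀').2 - r ((T^[n] z₀').2)
        = δs n + (r (Φ (ωs n)) - r ((T^[n] z₀').2)) := by
      rw [hr_retract]; show _ = ((T^[n] z₀').2 - Φ (ωs n)) + _; abel
    calc ‖(T^[n] z₀').2 - r ((T^[n] z₀').2)‖
        ≤ ‖δs n‖ + ‖r (Φ (ωs n)) - r ((T^[n] z₀').2)‖ := by
          rw [hsplit]; exact norm_add_le _ _
      _ ≤ ‖δs n‖ + κ * ‖Φ (ωs n) - (T^[n] z₀').2‖ :=
          add_le_add (le_refl _) (hr_lip _ _)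
      _ = (1 + κ) * ‖δs n‖ := by
          rw [show ‖Φ (ωs n) - (T^[n] z₀').2‖ = ‖δs n‖ from norm_sub_rev _ _]; ring
  have hstep : ∀ n, ‖δs (n + 1)‖ ≤ (1 + Ct (ωs n)) * ‖δs n‖ := by
    intro n
    have hTn : T^[n] z₀' = (φ (ωs n), (T^[n] z₀').2) := Prod.ext (hfst n) rfl
    have h1 : (T^[n + 1] z₀').2 = g (φ (ωs n), (T^[n] z₀').2) := by
      rw [Function.iterate_succ_apply']
      conv_lhs => rw [hTn]
    have h2 : Φ (ωs (n + 1)) = g (φ (σ ((T^[n] z₀').2)), r ((T^[n] z₀').2)) := by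
      rw [hωsucc n, hg_inv, hσ]
    have hδ1 : δs (n + 1)
        = g (φ (ωs n), (T^[n] z₀').2) - g (φ (σ ((T^[n] z₀').2)), r ((T^[n] z₀').2)) := by
      show (T^[n + 1] z₀').2 - Φ (ωs (n + 1)) = _
      rw [h1, h2]
    have := hg_lip (φ (ωs n)) (φ (σ ((T^[n] z₀').2))) ((T^[n] z₀').2) (r ((T^[n] z₀').2))
    have hrev : ‖φ (ωs n) - φ (σ ((T^[n] z₀').2))‖
        = ‖φ (σ ((T^[n] z₀').2)) - φ (ωs n)‖ := norm_sub_rev _ _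
    have hCtω : Ct (ωs n) = (1 + C (ωs n)) * κ := rfl
    rw [hδ1]
    calc ‖g (φ (ωs n), (T^[n] z₀').2) - g (φ (σ ((T^[n] z₀').2)), r ((T^[n] z₀').2))‖
        ≤ ‖φ (ωs n) - φ (σ ((T^[n] z₀').2))‖ + ‖(T^[n] z₀').2 - r ((T^[n] z₀').2)‖ := this
      _ ≤ C (ωs n) * (κ * ‖δs n‖) + (1 + κ) * ‖δs n‖ := by
          rw [hrev]; exact add_le_add (e2 n) (e3 n)
      _ = (1 + Ct (ωs n)) * ‖δs n‖ := by rw [hCtω]; ring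
  have hprod : ∀ n, ‖δs n‖ ≤ ‖δ₀‖ * ∏ i ∈ Finset.range n, (1 + Ct (ωs i)) := by
    intro n
    induction n with
    | zero =>
      have : δs 0 = δ₀ := by
        show (Φ ω₀ + δ₀) - Φ ω₀ = δ₀
        abel
      simp [this]
    | succ n ih =>
      calc ‖δs (n + 1)‖ ≤ (1 + Ct (ωs n)) * ‖δs n‖ := hstep n
        _ ≤ (1 + Ct (ωs n)) * (‖δ₀‖ * ∏ i ∈ Finset.range n, (1 + Ct (ωs i))) :=
            mul_le_mul_of_nonneg_left ih (by linarith [hCt0 (ωs n)])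
        _ = ‖δ₀‖ * ∏ i ∈ Finset.range (n + 1), (1 + Ct (ωs i)) := by
            rw [Finset.prod_range_succ]; ring
  have hpert : ∀ n, ‖φ (σ (Φ (ωs n) + δs n)) - φ (ωs n)‖ +
      ‖Φ (σ (Φ (ωs n) + δs n)) - Φ (ωs n)‖ ≤ Ct (ωs n) * ‖δs n‖ := by
    intro n
    rw [hy n]
    have := add_le_add (e2 n) (e1 n)
    have hCtω : Ct (ωs n) = (1 + C (ωs n)) * κ := rfl
    calc ‖φ (σ ((T^[n] z₀').2)) - φ (ωs n)‖ + ‖Φ (σ ((T^[n] z₀').2)) - Φ (ωs n)‖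
        ≤ C (ωs n) * (κ * ‖δs n‖) + κ * ‖δs n‖ := this
      _ = Ct (ωs n) * ‖δs n‖ := by rw [hCtω]; ring
  have hpert2 : ∀ n, ‖φ (σ (Φ (ωs n) + δs n)) - φ (ωs n)‖ +
      ‖Φ (σ (Φ (ωs n) + δs n)) - Φ (ωs n)‖
      ≤ ‖δ₀‖ * Ct (ωs n) * ∏ i ∈ Finset.range n, (1 + Ct (ωs i)) := by
    intro n
    calc _ ≤ Ct (ωs n) * ‖δs n‖ := hpert n
      _ ≤ Ct (ωs n) * (‖δ₀‖ * ∏ i ∈ Finset.range n, (1 + Ct (ωs i))) :=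
          mul_le_mul_of_nonneg_left (hprod n) (hCt0 _)
      _ = ‖δ₀‖ * Ct (ωs n) * ∏ i ∈ Finset.range n, (1 + Ct (ωs i)) := by ring
  have hsucc' : ∀ n, ωs (n + 1) = f (σ (Φ (ωs n) + δs n)) := by
    intro n; rw [hy n]
  exact ⟨ωs, rfl, fun n =>
    ⟨hfst n, hsucc' n, hstep n, hprod n, hpert n, hpert2 n⟩⟩
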